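/- Let ω ∈ Ω, Γ > 0, L ≥ Γ, let D ⊆ [t₀,ϑ₀]×ℝⁿ×S^{n−1} be nonempty, and let h : D → ℝ satisfy |h(t,x,s)| ≤ Γ(1+‖x‖) for all (t,x,s) ∈ D and |h(t',x',s')−h(t'',x'',s'')| ≤ ω(t'−t'') + L‖x'−x''‖ + Γ(1+min{‖x'‖,‖x''‖})‖s'−s''‖ for all (t',x',s'), (t'',x'',s'') ∈ D. Define F : [t₀,ϑ₀]×ℝⁿ×S^{n−1} → ℝ by F(t,x,s) = max{ −Γ(1+‖x‖), sup_{(τ,y,ξ)∈D} [h(τ,y,ξ) − ω(t−τ) − L‖x−y‖ − Γ(1+‖x‖)‖s−ξ‖] }. Then for all (t',x',s'), (t'',x'',s'') ∈ [t₀,ϑ₀]×ℝⁿ×S^{n−1} one has F(t',x',s') − F(t'',x'',s'') ≤ ω(t'−t'') + (L+4Γ)‖x'−x''‖ + Γ(1+min{‖x'‖,‖x''‖})‖s'−s''‖. -/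

import Mathlib

open Set Filter

noncomputable section

abbrev Eu (n : ℕ) := EuclideanSpace ℝ (Fin n)

/-- ω belongs to the class Ω: even, nonnegative, subadditive, and ω(δ) → 0 as δ → 0. -/
def MemOmega (ω : ℝ → ℝ) : Prop :=
  (∀ δ, 0 ≤ ω δ) ∧ (∀ δ, ω (-δ) = ω δ) ∧
  (∀ δ₁ δ₂, ω (δ₁ + δ₂) ≤ ω δ₁ + ω δ₂) ∧
  Tendsto ω (nhds 0) (nhds 0)

/-- The McShane-type extension
F(t,x,s) = max{−Γ(1+‖x‖), sup_{(τ,y,ξ)∈D}[h(τ,y,ξ) − ω(t−τ) − L‖x−y‖ − Γ(1+‖x‖)‖s−ξ‖]}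
of h satisfies on all of [t₀,ϑ₀]×ℝⁿ×S^{n−1} the modulus-of-continuity estimate
F(t',x',s') − F(t'',x'',s'') ≤ ω(t'−t'') + (L+4Γ)‖x'−x''‖ + Γ(1+min{‖x'‖,‖x''‖})‖s'−s''‖. -/
theorem mcshane_extension_modulus
    (t₀ ϑ₀ : ℝ) (ht : t₀ < ϑ₀) (n : ℕ) (hn : 1 ≤ n)
    (ω : ℝ → ℝ) (hω : MemOmega ω) (Γ L : ℝ) (hΓ : 0 < Γ) (hL : Γ ≤ L)
    (D : Set (ℝ × Eu n × Eu n)) (hDne : D.Nonempty)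
    (hDsub : ∀ p ∈ D, p.1 ∈ Icc t₀ ϑ₀ ∧ ‖p.2.2‖ = 1)
    (h : ℝ → Eu n → Eu n → ℝ)
    (hbd : ∀ p ∈ D, |h p.1 p.2.1 p.2.2| ≤ Γ * (1 + ‖p.2.1‖))
    (hlip : ∀ p ∈ D, ∀ q ∈ D,
      |h p.1 p.2.1 p.2.2 - h q.1 q.2.1 q.2.2| ≤
        ω (p.1 - q.1) + L * ‖p.2.1 - q.2.1‖ +
          Γ * (1 + min ‖p.2.1‖ ‖q.2.1‖) * ‖p.2.2 - q.2.2‖)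
    (F : ℝ → Eu n → Eu n → ℝ)
    (hF : ∀ (t : ℝ) (x s : Eu n),
      F t x s = max (-(Γ * (1 + ‖x‖)))
        (sSup ((fun q : ℝ × Eu n × Eu n =>
          h q.1 q.2.1 q.2.2 - ω (t - q.1) - L * ‖x - q.2.1‖ -
            Γ * (1 + ‖x‖) * ‖s - q.2.2‖) '' D))) :
    ∀ t' ∈ Icc t₀ ϑ₀, ∀ t'' ∈ Icc t₀ ϑ₀, ∀ x' x'' s' s'' : Eu n,
      ‖s'‖ = 1 → ‖s''‖ = 1 →
      F t' x' s' - F t'' x'' s'' ≤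
        ω (t' - t'') + (L + 4 * Γ) * ‖x' - x''‖ +
          Γ * (1 + min ‖x'‖ ‖x''‖) * ‖s' - s''‖ := by
  intro t' ht' t'' ht'' x' x'' s' s'' hs' hs''
  obtain ⟨hω0, hωeven, hωsub, -⟩ := hω
  set R := ω (t' - t'') + (L + 4 * Γ) * ‖x' - x''‖ +
      Γ * (1 + min ‖x'‖ ‖x''‖) * ‖s' - s''‖ with hRdef
  have hmin0 : 0 ≤ min ‖x'‖ ‖x''‖ := le_min (norm_nonneg _) (norm_nonneg _)
  have hRnn : Γ * ‖x' - x''‖ ≤ R := by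
    have h1 := hω0 (t' - t'')
    have h2 : 0 ≤ Γ * (1 + min ‖x'‖ ‖x''‖) * ‖s' - s''‖ := by positivity
    nlinarith [norm_nonneg (x' - x'')]
  have hbdd : BddAbove ((fun q : ℝ × Eu n × Eu n =>
      h q.1 q.2.1 q.2.2 - ω (t'' - q.1) - L * ‖x'' - q.2.1‖ -
        Γ * (1 + ‖x''‖) * ‖s'' - q.2.2‖) '' D) := by
    refine ⟨Γ * (1 + ‖x''‖), ?_⟩
    rintro _ ⟨q, hq, rfl⟩
    have h1 := (abs_le.mp (hbd q hq)).2
    have h2 := hω0 (t'' - q.1)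
    have h3 : ‖q.2.1‖ ≤ ‖x''‖ + ‖x'' - q.2.1‖ := by
      simpa using norm_sub_le x'' (x'' - q.2.1)
    have h4 : 0 ≤ Γ * (1 + ‖x''‖) * ‖s'' - q.2.2‖ := by positivity
    show h q.1 q.2.1 q.2.2 - ω (t'' - q.1) - L * ‖x'' - q.2.1‖ -
        Γ * (1 + ‖x''‖) * ‖s'' - q.2.2‖ ≤ Γ * (1 + ‖x''‖)
    nlinarith [mul_le_mul_of_nonneg_left h3 hΓ.le,
      mul_le_mul_of_nonneg_right hL (norm_nonneg (x'' - q.2.1))]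
  have key : ∀ q ∈ D,
      h q.1 q.2.1 q.2.2 - ω (t' - q.1) - L * ‖x' - q.2.1‖ -
        Γ * (1 + ‖x'‖) * ‖s' - q.2.2‖ ≤
      (h q.1 q.2.1 q.2.2 - ω (t'' - q.1) - L * ‖x'' - q.2.1‖ -
        Γ * (1 + ‖x''‖) * ‖s'' - q.2.2‖) + R := by
    intro q hq
    have hξ : ‖q.2.2‖ = 1 := (hDsub q hq).2
    have hωflip : ω (t'' - t') = ω (t' - t'') := by
      have e : t'' - t' = -(t' - t'') := by ring
      rw [e, hωeven]
    have hω1 : ω (t'' - q.1) ≤ ω (t' - t'') + ω (t' - q.1) := by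
      have h1 := hωsub (t'' - t') (t' - q.1)
      rw [hωflip] at h1
      simpa [show t'' - t' + (t' - q.1) = t'' - q.1 by ring] using h1
    have hx : ‖x'' - q.2.1‖ ≤ ‖x' - x''‖ + ‖x' - q.2.1‖ := by
      have heq : x'' - q.2.1 = (x' - q.2.1) - (x' - x'') := by abel
      rw [heq]
      have := norm_sub_le (x' - q.2.1) (x' - x'')
      linarith
    -- s-term estimate
    have htri : ‖s'' - q.2.2‖ ≤ ‖s' - s''‖ + ‖s' - q.2.2‖ := by
      have heq : s'' - q.2.2 = (s' - q.2.2) - (s' - s'') := by abel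
      rw [heq]
      have := norm_sub_le (s' - q.2.2) (s' - s'')
      linarith
    have hd2 : ‖s' - q.2.2‖ ≤ 2 := by
      have := norm_sub_le s' q.2.2; rw [hs', hξ] at this; linarith
    have hd2' : ‖s' - s''‖ ≤ 2 := by
      have := norm_sub_le s' s''; rw [hs', hs''] at this; linarith
    have hb : ‖x''‖ - ‖x'‖ ≤ ‖x' - x''‖ := by
      have := abs_norm_sub_norm_le x' x''
      have h2 := abs_le.mp this
      linarith [h2.1]
    have hm : ‖x''‖ ≤ min ‖x'‖ ‖x''‖ + ‖x' - x''‖ := by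
      rcases le_total ‖x'‖ ‖x''‖ with hc | hc
      · rw [min_eq_left hc]; linarith
      · rw [min_eq_right hc]; linarith [norm_nonneg (x' - x'')]
    have hΓa : 0 ≤ Γ * ‖x' - x''‖ := mul_nonneg hΓ.le (norm_nonneg _)
    have hs3 : Γ * (1 + ‖x''‖) * ‖s'' - q.2.2‖ ≤
        Γ * (1 + ‖x'‖) * ‖s' - q.2.2‖ +
          Γ * (1 + min ‖x'‖ ‖x''‖) * ‖s' - s''‖ + 4 * Γ * ‖x' - x''‖ := by
      have step1 : Γ * (1 + ‖x''‖) * ‖s'' - q.2.2‖ ≤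
          Γ * (1 + ‖x''‖) * (‖s' - s''‖ + ‖s' - q.2.2‖) := by
        apply mul_le_mul_of_nonneg_left htri
        positivity
      have e1 : Γ * (1 + ‖x''‖) * ‖s' - q.2.2‖ ≤
          Γ * (1 + ‖x'‖) * ‖s' - q.2.2‖ + 2 * Γ * ‖x' - x''‖ := by
        nlinarith [mul_le_mul_of_nonneg_left hb
            (mul_nonneg hΓ.le (norm_nonneg (s' - q.2.2))),
          mul_le_mul_of_nonneg_left hd2 hΓa]
      have e2 : Γ * (1 + ‖x''‖) * ‖s' - s''‖ ≤
          Γ * (1 + min ‖x'‖ ‖x''‖) * ‖s' - s''‖ + 2 * Γ * ‖x' - x''‖ := by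
        nlinarith [mul_le_mul_of_nonneg_left
            (show ‖x''‖ - min ‖x'‖ ‖x''‖ ≤ ‖x' - x''‖ from by linarith)
            (mul_nonneg hΓ.le (norm_nonneg (s' - s''))),
          mul_le_mul_of_nonneg_left hd2' hΓa]
      linarith [step1, e1, e2]
    have hL4 : 0 ≤ L := le_trans hΓ.le hL
    rw [hRdef]
    have hLx := mul_le_mul_of_nonneg_left hx hL4
    rw [mul_add] at hLx
    linarith [hLx, hω1, hs3]
  -- compare the sups
  rw [hF t' x' s', hF t'' x'' s'']
  have hsup : sSup ((fun q : ℝ × Eu n × Eu n =>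
      h q.1 q.2.1 q.2.2 - ω (t' - q.1) - L * ‖x' - q.2.1‖ -
        Γ * (1 + ‖x'‖) * ‖s' - q.2.2‖) '' D) ≤
      sSup ((fun q : ℝ × Eu n × Eu n =>
      h q.1 q.2.1 q.2.2 - ω (t'' - q.1) - L * ‖x'' - q.2.1‖ -
        Γ * (1 + ‖x''‖) * ‖s'' - q.2.2‖) '' D) + R := by
    apply csSup_le (hDne.image _)
    rintro _ ⟨q, hq, rfl⟩
    exact (key q hq).trans (add_le_add_left (le_csSup hbdd ⟨q, hq, rfl⟩) R)
  have ha : -(Γ * (1 + ‖x'‖)) ≤ -(Γ * (1 + ‖x''‖)) + R := by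
    have hb' : ‖x''‖ ≤ ‖x'‖ + ‖x' - x''‖ := by
      have heq : x'' = x' - (x' - x'') := by abel
      nth_rewrite 1 [heq]; exact norm_sub_le _ _
    nlinarith [hRnn]
  have := max_le_max ha hsup
  rw [max_add_add_right] at this
  linarith
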